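/- arXiv:1406.7192 — 4 statements merged into one kernel-verified Lean document; each statement's English description precedes it below -/
import Mathlib

section
/- In an additive category with kernels and cokernels, if f : X → Y is a semi-stable kernel and (S, s_T, s_Y) is a pushout of f along any morphism t : X → T, then s_T is again a semi-stable kernel. -/
open CategoryTheory CategoryTheory.Limits

universe v u

variable {C : Type u} [Category.{v} C] [Preadditive C]

/-- `f` is a kernel of some morphism. -/
def IsKernelMor {X Y : C} (f : X ⟶ Y) : Prop :=
  ∃ (Z : C) (g : Y ⟶ Z) (w : f ≫ g = 0), Nonempty (IsLimit (KernelFork.ofι f w))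

/-- `g` is a cokernel of some morphism. -/
def IsCokernelMor {Y Z : C} (g : Y ⟶ Z) : Prop :=
  ∃ (X : C) (f : X ⟶ Y) (w : f ≫ g = 0), Nonempty (IsColimit (CokernelCofork.ofπ g w))

/-- `f` is a semi-stable kernel: a kernel whose pushout along any morphism is again a kernel. -/
def IsSemiStableKernel {X Y : C} (f : X ⟶ Y) : Prop :=
  IsKernelMor f ∧ ∀ ⦃T S : C⦄ (t : X ⟶ T) (sY : Y ⟶ S) (sT : T ⟶ S),
    IsPushout f t sY sT → IsKernelMor sT

/-- `g` is a semi-stable cokernel: a cokernel whose pullback along any morphism is again a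
cokernel. -/
def IsSemiStableCokernel {Y Z : C} (g : Y ⟶ Z) : Prop :=
  IsCokernelMor g ∧ ∀ ⦃T P : C⦄ (t : T ⟶ Z) (pY : P ⟶ Y) (pT : P ⟶ T),
    IsPullback pY pT g t → IsCokernelMor pT

/-- `(f, g)` is a kernel-cokernel pair: `f` is a kernel of `g` and `g` is a cokernel of `f`. -/
def IsKernelCokernelPair {X Y Z : C} (f : X ⟶ Y) (g : Y ⟶ Z) : Prop :=
  ∃ (w : f ≫ g = 0),
    Nonempty (IsLimit (KernelFork.ofι f w)) ∧ Nonempty (IsColimit (CokernelCofork.ofπ g w))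

theorem stmt5 [HasKernels C] [HasCokernels C] {X Y T S : C}
    (f : X ⟶ Y) (t : X ⟶ T) (sY : Y ⟶ S) (sT : T ⟶ S)
    (hf : IsSemiStableKernel f) (hpo : IsPushout f t sY sT) :
    IsSemiStableKernel sT := by
  refine ⟨hf.2 t sY sT hpo, fun U V u vS vU h => ?_⟩
  exact hf.2 (t ≫ u) (sY ≫ vS) vU (hpo.paste_vert h)
end

section
/- In an additive category with kernels and cokernels, let (f, g) be a kernel-cokernel pair with f : X → Y a semi-stable kernel, g : Y → Z a semi-stable cokernel, and let k : K → Y be a kernel of g' ∘ g where (f', g') is another such pair with g' : Z → V. Let α : K → X' be the unique morphism with f' ∘ α = g ∘ k. Then the square formed by k, α, g, f' (i.e. g ∘ k = f' ∘ α) is a pullback square. -/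
open CategoryTheory CategoryTheory.Limits

universe v u

variable {C : Type u} [Category.{v} C] [Preadditive C]

theorem stmt15 [HasKernels C] [HasCokernels C] {X Y Z X' V K : C}
    (f : X ⟶ Y) (g : Y ⟶ Z) (f' : X' ⟶ Z) (g' : Z ⟶ V) (k : K ⟶ Y) (α : K ⟶ X')
    (hpair : IsKernelCokernelPair f g) (hpair' : IsKernelCokernelPair f' g')
    (hf : IsSemiStableKernel f) (hg : IsSemiStableCokernel g)
    (hf' : IsSemiStableKernel f') (hg' : IsSemiStableCokernel g')
    (hk : k ≫ (g ≫ g') = 0) (hker : Nonempty (IsLimit (KernelFork.ofι k hk)))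
    (hα : α ≫ f' = k ≫ g) :
    IsPullback k α g f' := by
  obtain ⟨hkl⟩ := hker
  obtain ⟨w', ⟨hl'⟩, _⟩ := hpair'
  have hmono : Mono f' := mono_of_isLimit_fork hl'
  have hw : ∀ s : PullbackCone g f', s.fst ≫ (g ≫ g') = 0 := by
    intro s
    rw [← Category.assoc, s.condition, Category.assoc, w', comp_zero]
  have hfac : ∀ s : PullbackCone g f',
      hkl.lift (KernelFork.ofι s.fst (hw s)) ≫ k = s.fst := fun s =>
    hkl.fac _ WalkingParallelPair.zero
  refine IsPullback.of_isLimit' ⟨hα.symm⟩ ?_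
  refine PullbackCone.IsLimit.mk _ (fun s => hkl.lift (KernelFork.ofι s.fst (hw s)))
    hfac ?_ ?_
  · intro s
    rw [← cancel_mono f', Category.assoc, hα, ← Category.assoc, hfac, s.condition]
  · intro s m hm1 hm2
    apply Fork.IsLimit.hom_ext hkl
    rw [Fork.ι_ofι, hm1]
    exact (hfac s).symm
end

section
/- In an additive category with kernels and cokernels, let (f, g) be a kernel-cokernel pair with f semi-stable kernel and g : Y → Z semi-stable cokernel, and let (P, p_R, p_Y) be a pullback of g along a morphism r : R → Z. Then the pair ((-p_R, p_Y)ᵗ : P → R ⊕ Y, [r, g] : R ⊕ Y → Z) is a kernel-cokernel pair consisting of a semi-stable kernel and a semi-stable cokernel. -/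
open CategoryTheory CategoryTheory.Limits

universe v u

variable {C : Type u} [Category.{v} C] [Preadditive C]

/- Auxiliary lemmas -/

theorem stmt16_epi_of_cofork {X Y Z : C} {f : X ⟶ Y} {g : Y ⟶ Z} {w : f ≫ g = 0}
    (h : IsColimit (CokernelCofork.ofπ g w)) : Epi g :=
  ⟨fun u v huv => Cofork.IsColimit.hom_ext h (by simpa using huv)⟩

theorem stmt16_comp_desc [HasBinaryBiproducts C] {W A B D : C} (z : W ⟶ A ⊞ B)
    (u : A ⟶ D) (v : B ⟶ D) :
    z ≫ biprod.desc u v = (z ≫ biprod.fst) ≫ u + (z ≫ biprod.snd) ≫ v := by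
  have hz : z = biprod.lift (z ≫ biprod.fst) (z ≫ biprod.snd) := by
    apply biprod.hom_ext <;> simp
  conv_lhs => rw [hz, biprod.lift_desc]

theorem stmt16_lift_comp [HasBinaryBiproducts C] {W A B D : C} (u : D ⟶ A) (v : D ⟶ B)
    (z : A ⊞ B ⟶ W) :
    biprod.lift u v ≫ z = u ≫ (biprod.inl ≫ z) + v ≫ (biprod.inr ≫ z) := by
  have hz : z = biprod.desc (biprod.inl ≫ z) (biprod.inr ≫ z) := by
    apply biprod.hom_ext' <;> simp
  conv_lhs => rw [hz, biprod.lift_desc]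

/-- Pullbacks exist in an additive category with kernels, with explicit legs. -/
theorem stmt16_exists_isPullback [HasKernels C] [HasBinaryBiproducts C] {A B D : C}
    (u : A ⟶ D) (v : B ⟶ D) :
    ∃ (P' : C) (pa : P' ⟶ A) (pb : P' ⟶ B), IsPullback pa pb u v := by
  set d : A ⊞ B ⟶ D := biprod.desc u (-v) with hd
  have hls : ∀ s : PullbackCone u v, biprod.lift s.fst s.snd ≫ d = 0 := by
    intro s
    rw [hd, biprod.lift_desc, Preadditive.comp_neg, s.condition]
    abel
  have hcond : (kernel.ι d ≫ biprod.fst) ≫ u = (kernel.ι d ≫ biprod.snd) ≫ v := by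
    have h1 : kernel.ι d ≫ d = 0 := kernel.condition d
    rw [hd, stmt16_comp_desc, Preadditive.comp_neg] at h1
    rw [← sub_eq_zero, sub_eq_add_neg]
    exact h1
  refine ⟨kernel d, kernel.ι d ≫ biprod.fst, kernel.ι d ≫ biprod.snd,
    IsPullback.of_isLimit (PullbackCone.IsLimit.mk hcond
      (fun s => kernel.lift d (biprod.lift s.fst s.snd) (hls s)) (fun s => ?_) (fun s => ?_)
      (fun s m hm1 hm2 => ?_))⟩
  · rw [← Category.assoc, kernel.lift_ι, biprod.lift_fst]
  · rw [← Category.assoc, kernel.lift_ι, biprod.lift_snd]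
  · have : m ≫ kernel.ι d = kernel.lift d (biprod.lift s.fst s.snd) (hls s) ≫ kernel.ι d := by
      rw [kernel.lift_ι]
      apply biprod.hom_ext
      · simpa using hm1
      · simpa using hm2
    exact (cancel_mono (kernel.ι d)).mp this

theorem stmt16 [HasKernels C] [HasCokernels C] [HasBinaryBiproducts C] {X Y Z R P : C}
    (f : X ⟶ Y) (g : Y ⟶ Z) (r : R ⟶ Z) (pY : P ⟶ Y) (pR : P ⟶ R)
    (hpair : IsKernelCokernelPair f g)
    (hf : IsSemiStableKernel f) (hg : IsSemiStableCokernel g)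
    (hpb : IsPullback pY pR g r) :
    IsKernelCokernelPair (biprod.lift (-pR) pY) (biprod.desc r g) ∧
      IsSemiStableKernel (biprod.lift (-pR) pY) ∧
      IsSemiStableCokernel (biprod.desc r g) := by
  obtain ⟨w₀, ⟨hker⟩, ⟨hcoker⟩⟩ := hpair
  haveI hgepi : Epi g := stmt16_epi_of_cofork hcoker
  -- the zero-composition witness
  have hw : biprod.lift (-pR) pY ≫ biprod.desc r g = 0 := by
    rw [biprod.lift_desc, Preadditive.neg_comp, hpb.w]
    abel
  -- pR is a cokernel, hence epi
  obtain ⟨M₀, m₀, hm₀, ⟨cm₀⟩⟩ := hg.2 r pY pR hpb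
  haveI hpRepi : Epi pR := stmt16_epi_of_cofork cm₀
  -- the induced map f' : X ⟶ P
  set f' : X ⟶ P := hpb.lift f 0 (by rw [w₀, zero_comp]) with hf'
  have hf'Y : f' ≫ pY = f := hpb.lift_fst _ _ _
  have hf'R : f' ≫ pR = 0 := hpb.lift_snd _ _ _
  have hf'lift : f' ≫ biprod.lift (-pR) pY = f ≫ biprod.inr := by
    apply biprod.hom_ext
    · simp [hf'R]
    · simp [hf'Y]
  -- f' is "the kernel of pR" as far as factorizations are concerned
  have hfker : ∀ {V : C} (z : V ⟶ P), z ≫ pR = 0 → ∃ x : V ⟶ X, x ≫ f' = z := by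
    intro V z hz
    have hzg : (z ≫ pY) ≫ g = 0 := by
      rw [Category.assoc, hpb.w, ← Category.assoc, hz, zero_comp]
    obtain ⟨x, hx⟩ := KernelFork.IsLimit.lift' hker (z ≫ pY) hzg
    have hx' : x ≫ f = z ≫ pY := hx
    refine ⟨x, hpb.hom_ext ?_ ?_⟩
    · rw [Category.assoc, hf'Y, hx']
    · rw [Category.assoc, hf'R, comp_zero, hz]
  -- the kernel map is mono
  haveI hmono : Mono (biprod.lift (-pR) pY) := by
    refine ⟨fun {V} a b hab => hpb.hom_ext ?_ ?_⟩
    · have := congrArg (fun q => q ≫ biprod.snd) hab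
      simpa using this
    · have := congrArg (fun q => q ≫ biprod.fst) hab
      simp only [Category.assoc, biprod.lift_fst, Preadditive.comp_neg, neg_inj] at this
      exact this
  -- Part 1a : the kernel fork is a limit
  have klim : IsLimit (KernelFork.ofι (biprod.lift (-pR) pY) hw) := by
    refine KernelFork.IsLimit.ofι' _ _ (fun {V} z hz => ?_)
    have hcmp : (z ≫ biprod.snd) ≫ g = (-(z ≫ biprod.fst)) ≫ r := by
      rw [stmt16_comp_desc] at hz
      rw [Preadditive.neg_comp]
      exact eq_neg_of_add_eq_zero_left (by rw [add_comm]; exact hz)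
    refine ⟨hpb.lift (z ≫ biprod.snd) (-(z ≫ biprod.fst)) hcmp, ?_⟩
    apply biprod.hom_ext
    · rw [Category.assoc, biprod.lift_fst, Preadditive.comp_neg, hpb.lift_snd, neg_neg]
    · rw [Category.assoc, biprod.lift_snd, hpb.lift_fst]
  -- Part 1b : the cokernel cofork is a colimit
  haveI hdescepi : Epi (biprod.desc r g) := epi_of_epi_fac (biprod.inr_desc r g)
  have ccolim : IsColimit (CokernelCofork.ofπ (biprod.desc r g) hw) := by
    refine CokernelCofork.IsColimit.ofπ' _ _ (fun {A} v hv => ?_)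
    have hfv : f ≫ biprod.inr ≫ v = 0 := by
      rw [← Category.assoc, ← hf'lift, Category.assoc, hv, comp_zero]
    obtain ⟨u, hu⟩ := CokernelCofork.IsColimit.desc' hcoker (biprod.inr ≫ v) hfv
    have hu' : g ≫ u = biprod.inr ≫ v := hu
    -- from hv derive pY ≫ inr ≫ v = pR ≫ inl ≫ v
    have hv' : (-pR) ≫ (biprod.inl ≫ v) + pY ≫ (biprod.inr ≫ v) = 0 := by
      rw [← stmt16_lift_comp, hv]
    rw [Preadditive.neg_comp, neg_add_eq_zero] at hv'
    refine ⟨u, ?_⟩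
    apply biprod.hom_ext'
    · rw [← Category.assoc, biprod.inl_desc, ← cancel_epi pR, ← Category.assoc, ← hpb.w,
        Category.assoc, hu', hv']
    · rw [← Category.assoc, biprod.inr_desc, hu']
  -- Part 2 : the bicartesian square X → P, Y → R ⊞ Y is a pushout
  have Acomm : f ≫ biprod.inr = f' ≫ biprod.lift (-pR) pY := hf'lift.symm
  have A : IsPushout f f' biprod.inr (biprod.lift (-pR) pY) := by
    have hφ : ∀ s : PushoutCocone f f', m₀ ≫ (pY ≫ s.inl - s.inr) = 0 := by
      intro s
      obtain ⟨x₀, hx₀⟩ := hfker m₀ hm₀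
      rw [← hx₀, Category.assoc, Preadditive.comp_sub, ← Category.assoc f' pY, hf'Y,
        s.condition, sub_self, comp_zero]
    have hwR : ∀ s : PushoutCocone f f',
        pR ≫ (CokernelCofork.IsColimit.desc' cm₀ (pY ≫ s.inl - s.inr) (hφ s)).1
          = pY ≫ s.inl - s.inr := fun s =>
      (CokernelCofork.IsColimit.desc' cm₀ (pY ≫ s.inl - s.inr) (hφ s)).2
    refine IsPushout.of_isColimit (PushoutCocone.IsColimit.mk Acomm
      (fun s => biprod.desc
        (CokernelCofork.IsColimit.desc' cm₀ (pY ≫ s.inl - s.inr) (hφ s)).1 s.inl)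
      (fun s => biprod.inr_desc _ _) (fun s => ?_) (fun s m hm1 hm2 => ?_))
    · rw [biprod.lift_desc, Preadditive.neg_comp, hwR s]
      abel
    · apply biprod.hom_ext'
      · rw [← cancel_epi pR, ← Category.assoc, biprod.inl_desc, hwR s]
        have h := hm2
        rw [stmt16_lift_comp, hm1, Preadditive.neg_comp] at h
        rw [← Category.assoc] at h
        rw [← h]
        abel
      · rw [biprod.inr_desc, hm1]
  have part2 : IsSemiStableKernel (biprod.lift (-pR) pY) := by
    constructor
    · exact ⟨Z, biprod.desc r g, hw, ⟨klim⟩⟩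
    · intro T S t sY sT hpo
      exact hf.2 (f' ≫ t) (biprod.inr ≫ sY) sT (A.paste_vert hpo)
  have part3 : IsSemiStableCokernel (biprod.desc r g) := by
    constructor
    · exact ⟨P, biprod.lift (-pR) pY, hw, ⟨ccolim⟩⟩
    · intro T Q t q qT hq
      -- pullback of g along t
      obtain ⟨Q', q'Y, q'T, hQ'⟩ := stmt16_exists_isPullback g t
      obtain ⟨M, m, hm, ⟨cm⟩⟩ := hg.2 t q'Y q'T hQ'
      haveI : Epi q'T := stmt16_epi_of_cofork cm
      -- the comparison maps into Q
      have hαc : biprod.lift 0 q'Y ≫ biprod.desc r g = q'T ≫ t := by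
        rw [biprod.lift_desc, zero_comp, zero_add, hQ'.w]
      set α : Q' ⟶ Q := hq.lift (biprod.lift 0 q'Y) q'T hαc with hα
      have hαq : α ≫ q = biprod.lift 0 q'Y := hq.lift_fst _ _ _
      have hαT : α ≫ qT = q'T := hq.lift_snd _ _ _
      have hkc : biprod.lift (-pR) pY ≫ biprod.desc r g = (0 : P ⟶ T) ≫ t := by
        rw [hw, zero_comp]
      set k : P ⟶ Q := hq.lift (biprod.lift (-pR) pY) 0 hkc with hk
      have hkq : k ≫ q = biprod.lift (-pR) pY := hq.lift_fst _ _ _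
      have hkT : k ≫ qT = 0 := hq.lift_snd _ _ _
      -- the auxiliary pullback E and its epi leg
      obtain ⟨E, e', eQ, hE⟩ := stmt16_exists_isPullback q'T qT
      have hgE : IsPullback (e' ≫ q'Y) eQ g (qT ≫ t) := hE.paste_horiz hQ'
      obtain ⟨ME, mE, hmE, ⟨cmE⟩⟩ := hg.2 (qT ≫ t) (e' ≫ q'Y) eQ hgE
      haveI : Epi eQ := stmt16_epi_of_cofork cmE
      -- the map E ⟶ P
      have habc : (eQ ≫ q ≫ biprod.snd - e' ≫ q'Y) ≫ g = (-(eQ ≫ q ≫ biprod.fst)) ≫ r := by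
        have h1 : (q ≫ biprod.fst) ≫ r + (q ≫ biprod.snd) ≫ g = qT ≫ t := by
          rw [← stmt16_comp_desc, hq.w]
        simp only [Category.assoc] at h1
        have h2 : q ≫ biprod.snd ≫ g = qT ≫ t - q ≫ biprod.fst ≫ r := by
          rw [← h1]; abel
        have h3 : e' ≫ q'Y ≫ g = eQ ≫ qT ≫ t := by
          rw [hQ'.w, ← Category.assoc, hE.w, Category.assoc]
        simp only [Preadditive.sub_comp, Preadditive.neg_comp, Category.assoc]
        rw [h2, h3, Preadditive.comp_sub]
        abel
      set eP : E ⟶ P := hpb.lift (eQ ≫ q ≫ biprod.snd - e' ≫ q'Y)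
        (-(eQ ≫ q ≫ biprod.fst)) habc with heP
      have hePY : eP ≫ pY = eQ ≫ q ≫ biprod.snd - e' ≫ q'Y := hpb.lift_fst _ _ _
      have hePR : eP ≫ pR = -(eQ ≫ q ≫ biprod.fst) := hpb.lift_snd _ _ _
      -- the decomposition of eQ
      have key : eQ = e' ≫ α + eP ≫ k := by
        apply hq.hom_ext
        · rw [Preadditive.add_comp, Category.assoc, Category.assoc, hαq, hkq]
          apply biprod.hom_ext
          · rw [Preadditive.add_comp]
            simp only [Category.assoc, biprod.lift_fst, comp_zero, Preadditive.comp_neg,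
              hePR, neg_neg, zero_add]
          · rw [Preadditive.add_comp]
            simp only [Category.assoc, biprod.lift_snd]
            rw [hePY]
            abel
        · rw [Preadditive.add_comp, Category.assoc, Category.assoc, hαT, hkT, comp_zero,
            add_zero, hE.w]
      haveI : Epi qT := epi_of_epi_fac hαT
      -- qT is the cokernel of [m ≫ α, k] : M ⊞ P ⟶ Q
      have hμ : biprod.desc (m ≫ α) k ≫ qT = 0 := by
        apply biprod.hom_ext'
        · rw [← Category.assoc, biprod.inl_desc, Category.assoc, hαT, hm, comp_zero]
        · rw [← Category.assoc, biprod.inr_desc, hkT, comp_zero]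
      refine ⟨M ⊞ P, biprod.desc (m ≫ α) k, hμ, ⟨CokernelCofork.IsColimit.ofπ' _ _
        (fun {A} v hv => ?_)⟩⟩
      have h1 : m ≫ α ≫ v = 0 := by
        rw [← Category.assoc, ← biprod.inl_desc (m ≫ α) k, Category.assoc, hv, comp_zero]
      have h2 : k ≫ v = 0 := by
        rw [← biprod.inr_desc (m ≫ α) k, Category.assoc, hv, comp_zero]
      obtain ⟨u, hu⟩ := CokernelCofork.IsColimit.desc' cm (α ≫ v) h1
      have hu' : q'T ≫ u = α ≫ v := hu
      refine ⟨u, ?_⟩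
      rw [← cancel_epi eQ, ← Category.assoc, ← hE.w, Category.assoc, hu']
      conv_rhs => rw [key]
      rw [Preadditive.add_comp, Category.assoc, Category.assoc, h2, comp_zero, add_zero]
  exact ⟨⟨hw, ⟨klim⟩, ⟨ccolim⟩⟩, part2, part3⟩
end

section
/- In an additive category with kernels and cokernels, every exact structure ℰ' is contained in the class ℰ of kernel-cokernel pairs (f, g) with f a semi-stable kernel and g a semi-stable cokernel; i.e., ℰ is the maximal exact structure. -/
open CategoryTheory CategoryTheory.Limits

universe v u

variable {C : Type u} [Category.{v} C] [Preadditive C]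

/-- `f` is an admissible monomorphism with respect to the class `E`. -/
def AdmMono (E : ∀ ⦃X Y Z : C⦄, (X ⟶ Y) → (Y ⟶ Z) → Prop) {X Y : C} (f : X ⟶ Y) : Prop :=
  ∃ (Z : C) (g : Y ⟶ Z), E f g

/-- `g` is an admissible epimorphism with respect to the class `E`. -/
def AdmEpi (E : ∀ ⦃X Y Z : C⦄, (X ⟶ Y) → (Y ⟶ Z) → Prop) {Y Z : C} (g : Y ⟶ Z) : Prop :=
  ∃ (X : C) (f : X ⟶ Y), E f g

/-- `E` is an exact structure in Quillen's sense: a class of kernel-cokernel pairs closed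
under isomorphisms and satisfying axioms [E0], [E0op], [E1], [E1op], [E2], [E2op]. -/
structure IsExactStructure (E : ∀ ⦃X Y Z : C⦄, (X ⟶ Y) → (Y ⟶ Z) → Prop) : Prop where
  pairs : ∀ ⦃X Y Z : C⦄ (f : X ⟶ Y) (g : Y ⟶ Z), E f g → IsKernelCokernelPair f g
  iso_closed : ∀ ⦃X Y Z X' Y' Z' : C⦄ (f : X ⟶ Y) (g : Y ⟶ Z)
      (iX : X ≅ X') (iY : Y ≅ Y') (iZ : Z ≅ Z') (f' : X' ⟶ Y') (g' : Y' ⟶ Z'),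
      E f g → f ≫ iY.hom = iX.hom ≫ f' → g ≫ iZ.hom = iY.hom ≫ g' → E f' g'
  e0 : ∀ X : C, AdmMono E (𝟙 X)
  e0op : ∀ X : C, AdmEpi E (𝟙 X)
  e1 : ∀ ⦃X Y Z : C⦄ (f : X ⟶ Y) (f' : Y ⟶ Z),
      AdmMono E f → AdmMono E f' → AdmMono E (f ≫ f')
  e1op : ∀ ⦃X Y Z : C⦄ (g : X ⟶ Y) (g' : Y ⟶ Z),
      AdmEpi E g → AdmEpi E g' → AdmEpi E (g ≫ g')
  e2 : ∀ ⦃X Y T : C⦄ (f : X ⟶ Y) (t : X ⟶ T), AdmMono E f →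
      ∃ (S : C) (sY : Y ⟶ S) (sT : T ⟶ S), IsPushout f t sY sT ∧ AdmMono E sT
  e2op : ∀ ⦃Y Z T : C⦄ (g : Y ⟶ Z) (t : T ⟶ Z), AdmEpi E g →
      ∃ (P : C) (pY : P ⟶ Y) (pT : P ⟶ T), IsPullback pY pT g t ∧ AdmEpi E pT

/-- The class of all kernel-cokernel pairs `(f, g)` with `f` a semi-stable kernel and `g` a
semi-stable cokernel. -/
def MaxExact : ∀ ⦃X Y Z : C⦄, (X ⟶ Y) → (Y ⟶ Z) → Prop :=
  fun _ _ _ f g => IsKernelCokernelPair f g ∧ IsSemiStableKernel f ∧ IsSemiStableCokernel g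

lemma isKernelMorAux_comp_iso {X Y Y' : C} {m : X ⟶ Y} (e : Y ≅ Y')
    (h : IsKernelMor m) : IsKernelMor (m ≫ e.hom) := by
  obtain ⟨Z, g, w, ⟨hl⟩⟩ := h
  have hmono : Mono m := mono_of_isLimit_fork hl
  refine ⟨Z, e.inv ≫ g, by simp [w], ⟨?_⟩⟩
  refine KernelFork.IsLimit.ofι' _ _ (fun {A} k hk => ?_)
  have hk' : (k ≫ e.inv) ≫ g = 0 := by simpa using hk
  exact ⟨(KernelFork.IsLimit.lift' hl (k ≫ e.inv) hk').1, by
    have := (KernelFork.IsLimit.lift' hl (k ≫ e.inv) hk').2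
    simp only [KernelFork.ι_ofι] at this; rw [← Category.assoc, this]; simp⟩

lemma isCokernelMorAux_iso_comp {Y Y' Z : C} {p : Y ⟶ Z} (e : Y' ≅ Y)
    (h : IsCokernelMor p) : IsCokernelMor (e.hom ≫ p) := by
  obtain ⟨X, f, w, ⟨hc⟩⟩ := h
  have hepi : Epi p := epi_of_isColimit_cofork hc
  refine ⟨X, f ≫ e.inv, by simp [w], ⟨?_⟩⟩
  refine CokernelCofork.IsColimit.ofπ' _ _ (fun {A} k hk => ?_)
  have hk' : f ≫ e.inv ≫ k = 0 := by simpa using hk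
  exact ⟨(CokernelCofork.IsColimit.desc' hc (e.inv ≫ k) hk').1, by
    have := (CokernelCofork.IsColimit.desc' hc (e.inv ≫ k) hk').2
    simp only [Cofork.π_ofπ] at this; rw [Category.assoc, this]; simp⟩

lemma isKernelMorAux_of_pushouts {X Y T S S' : C} {f : X ⟶ Y} {t : X ⟶ T}
    {sY : Y ⟶ S} {sT : T ⟶ S} {sY' : Y ⟶ S'} {sT' : T ⟶ S'}
    (h : IsPushout f t sY sT) (h' : IsPushout f t sY' sT')
    (hk : IsKernelMor sT') : IsKernelMor sT := by
  have comp : sT' ≫ (h'.isColimit.coconePointUniqueUpToIso h.isColimit).hom = sT := by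
    exact h'.isColimit.comp_coconePointUniqueUpToIso_hom h.isColimit WalkingSpan.right
  rw [← comp]
  exact isKernelMorAux_comp_iso _ hk

lemma isCokernelMorAux_of_pullbacks {Y Z T P P' : C} {g : Y ⟶ Z} {t : T ⟶ Z}
    {pY : P ⟶ Y} {pT : P ⟶ T} {pY' : P' ⟶ Y} {pT' : P' ⟶ T}
    (h : IsPullback pY pT g t) (h' : IsPullback pY' pT' g t)
    (hk : IsCokernelMor pT') : IsCokernelMor pT := by
  have comp : (h.isLimit.conePointUniqueUpToIso h'.isLimit).hom ≫ pT' = pT := by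
    simpa using h.isLimit.conePointUniqueUpToIso_hom_comp h'.isLimit WalkingCospan.right
  rw [← comp]
  exact isCokernelMorAux_iso_comp _ hk


theorem stmt19 [HasKernels C] [HasCokernels C]
    (E' : ∀ ⦃X Y Z : C⦄, (X ⟶ Y) → (Y ⟶ Z) → Prop) (hE' : IsExactStructure E') :
    ∀ ⦃X Y Z : C⦄ (f : X ⟶ Y) (g : Y ⟶ Z), E' f g → MaxExact f g := by
  intro X Y Z f g hfg
  obtain ⟨w, ⟨hker⟩, ⟨hcoker⟩⟩ := hE'.pairs f g hfg
  refine ⟨⟨w, ⟨hker⟩, ⟨hcoker⟩⟩, ⟨⟨Z, g, w, ⟨hker⟩⟩, ?_⟩, ⟨⟨X, f, w, ⟨hcoker⟩⟩, ?_⟩⟩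
  · intro T S t sY sT hpo
    obtain ⟨S', sY', sT', hpo', hadm⟩ := hE'.e2 f t ⟨Z, g, hfg⟩
    obtain ⟨Z', g', hEst⟩ := hadm
    obtain ⟨w', ⟨hk⟩, _⟩ := hE'.pairs sT' g' hEst
    exact isKernelMorAux_of_pushouts hpo hpo' ⟨Z', g', w', ⟨hk⟩⟩
  · intro T P t pY pT hpb
    obtain ⟨P', pY', pT', hpb', hadm⟩ := hE'.e2op g t ⟨X, f, hfg⟩
    obtain ⟨X', f', hEpt⟩ := hadm
    obtain ⟨w', _, ⟨hc⟩⟩ := hE'.pairs f' pT' hEpt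
    exact isCokernelMorAux_of_pullbacks hpb hpb' ⟨X', f', w', ⟨hc⟩⟩
end
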